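/- Let p be an odd prime and suppose (d/p) = 1 where t² - 4n = d·ℓ² with n ∈ {±1}, d a fundamental discriminant, ℓ > 0. Fix a square root √d of d modulo p^α. Then n·((t + √d·ℓ)/2)² ≡ 1 mod p^α if and only if ℓ ≡ 0 mod p^α. -/

import Mathlib

/-- A fundamental discriminant. -/
def IsFundamentalDiscriminant (d : ℤ) : Prop :=
  (d % 4 = 1 ∧ Squarefree d ∧ d ≠ 1) ∨
    (d % 4 = 0 ∧ Squarefree (d / 4) ∧ (d / 4) % 4 ≠ 1)

/-- Let `p` be an odd prime and suppose `(d/p) = 1` where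
`t² - 4n = d·ℓ²` with `n ∈ {±1}`, `d` a fundamental discriminant, `ℓ > 0`. Fix a square
root `r = √d` of `d` modulo `p^α`. Then `n·((t + √d·ℓ)/2)² ≡ 1 mod p^α` if and only if
`ℓ ≡ 0 mod p^α`. (Since `p` is odd, `2` is invertible mod `p^α`, and `(t + √d·ℓ)/2` is
the element `x` with `2x = t + rℓ`.) -/
theorem norm_one_iff_padic (p : ℕ) [hp : Fact p.Prime] (hp2 : p ≠ 2)
    (α : ℕ) (hα : 1 ≤ α) (n t : ℤ) (hn : n = 1 ∨ n = -1)
    (d : ℤ) (ℓ : ℕ) (hℓ : 0 < ℓ) (hd : IsFundamentalDiscriminant d)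
    (hdec : t ^ 2 - 4 * n = d * (ℓ : ℤ) ^ 2)
    (hleg : legendreSym p d = 1)
    (r : ZMod (p ^ α)) (hr : r ^ 2 = (d : ZMod (p ^ α)))
    (x : ZMod (p ^ α)) (hx : 2 * x = (t : ZMod (p ^ α)) + r * (ℓ : ZMod (p ^ α))) :
    (n : ZMod (p ^ α)) * x ^ 2 = 1 ↔ p ^ α ∣ ℓ := by
  have hNZ : NeZero (p ^ α) := ⟨pow_ne_zero _ hp.out.pos.ne'⟩
  -- basic units
  have hn2 : ((n : ZMod (p ^ α))) ^ 2 = 1 := by rcases hn with h | h <;> simp [h]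
  have hnu : IsUnit (n : ZMod (p ^ α)) :=
    IsUnit.of_mul_eq_one _ (by rw [← sq]; exact hn2)
  have h2p : ¬ (2 ∣ p) := by
    intro h
    rcases (Nat.prime_dvd_prime_iff_eq Nat.prime_two hp.out).mp h with rfl
    exact hp2 rfl
  have h2 : IsUnit (2 : ZMod (p ^ α)) := by
    have : IsUnit ((2 : ℕ) : ZMod (p ^ α)) := by
      rw [ZMod.isUnit_iff_coprime]
      exact Nat.Coprime.pow_right _ ((Nat.prime_two.coprime_iff_not_dvd).mpr h2p)
    simpa using this
  -- d is nonzero mod p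
  have hdp : (d : ZMod p) ≠ 0 := by
    intro h
    rw [← legendreSym.eq_zero_iff] at h
    omega
  -- r is a unit
  have hdvd : p ∣ p ^ α := dvd_pow_self p (by omega)
  set π : ZMod (p ^ α) →+* ZMod p := ZMod.castHom hdvd (ZMod p) with hπdef
  have hπr : (π r) ^ 2 = (d : ZMod p) := by
    rw [← map_pow, hr]; simp [hπdef]
  have hπr0 : π r ≠ 0 := by
    intro h
    rw [h] at hπr
    simp at hπr
    exact hdp hπr.symm
  have hru : IsUnit r := by
    have hval : (r.val : ZMod p) = π r := by
      rw [hπdef, ZMod.castHom_apply, ← ZMod.natCast_val]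
    have hpr : ¬ p ∣ r.val := by
      intro h
      exact hπr0 (by rw [← hval, ZMod.natCast_eq_zero_iff]; exact h)
    have : IsUnit ((r.val : ℕ) : ZMod (p ^ α)) := by
      rw [ZMod.isUnit_iff_coprime]
      exact Nat.Coprime.pow_right _
        (Nat.Coprime.symm ((hp.out.coprime_iff_not_dvd).mpr hpr))
    simpa [ZMod.natCast_val, ZMod.cast_id] using this
  have hdu : IsUnit (d : ZMod (p ^ α)) := by rw [← hr]; exact hru.pow 2
  -- cast the decomposition
  have hdecR : (t : ZMod (p ^ α)) ^ 2 - 4 * n = d * (ℓ : ZMod (p ^ α)) ^ 2 := by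
    have := congrArg (Int.cast : ℤ → ZMod (p ^ α)) hdec
    push_cast at this
    exact this
  -- t + rℓ is a unit since (t+rℓ)(t-rℓ) = 4n
  have hmul : ((t : ZMod (p ^ α)) + r * ℓ) * ((t : ZMod (p ^ α)) - r * ℓ)
      = 4 * n := by
    linear_combination hdecR - (ℓ : ZMod (p ^ α)) ^ 2 * hr
  have hu1 : IsUnit ((t : ZMod (p ^ α)) + r * ℓ) := by
    have h4n : IsUnit ((4 : ZMod (p ^ α)) * n) := by
      have : (4 : ZMod (p ^ α)) = 2 * 2 := by norm_num
      rw [this]; exact (h2.mul h2).mul hnu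
    rw [← hmul] at h4n
    exact (IsUnit.mul_iff.mp h4n).1
  -- dℓ + tr is a unit since r(dℓ+tr) = d(t+rℓ)
  have hu2 : IsUnit ((d : ZMod (p ^ α)) * ℓ + t * r) := by
    have h1 : r * ((d : ZMod (p ^ α)) * ℓ + t * r)
        = (d : ZMod (p ^ α)) * ((t : ZMod (p ^ α)) + r * ℓ) := by
      linear_combination (t : ZMod (p ^ α)) * hr
    have h2' : IsUnit (r * ((d : ZMod (p ^ α)) * ℓ + t * r)) := by
      rw [h1]; exact hdu.mul hu1
    exact (IsUnit.mul_iff.mp h2').2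
  -- key identity
  have key : (2 : ZMod (p ^ α)) * n * ℓ * ((d : ZMod (p ^ α)) * ℓ + t * r)
      = 4 * ((n : ZMod (p ^ α)) * x ^ 2 - 1) := by
    linear_combination -((n : ZMod (p ^ α)) * (2 * x + t + r * ℓ)) * hx
      - (n : ZMod (p ^ α)) * (ℓ : ZMod (p ^ α)) ^ 2 * hr
      - (n : ZMod (p ^ α)) * hdecR - 4 * hn2
  have hu : IsUnit ((2 : ZMod (p ^ α)) * n * ((d : ZMod (p ^ α)) * ℓ + t * r)) :=
    (h2.mul hnu).mul hu2
  have h4u : IsUnit (4 : ZMod (p ^ α)) := by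
    have : (4 : ZMod (p ^ α)) = 2 * 2 := by norm_num
    rw [this]; exact h2.mul h2
  constructor
  · intro h
    have h0 : (2 : ZMod (p ^ α)) * n * ((d : ZMod (p ^ α)) * ℓ + t * r) * ℓ = 0 := by
      rw [show (2 : ZMod (p ^ α)) * n * ((d : ZMod (p ^ α)) * ℓ + t * r) * ℓ
        = 2 * n * ℓ * ((d : ZMod (p ^ α)) * ℓ + t * r) by ring, key, h]
      ring
    have : (ℓ : ZMod (p ^ α)) = 0 := (hu.mul_right_eq_zero).mp h0
    exact (ZMod.natCast_eq_zero_iff _ _).mp this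
  · intro h
    have hℓ0 : (ℓ : ZMod (p ^ α)) = 0 := (ZMod.natCast_eq_zero_iff _ _).mpr h
    have h0 : (4 : ZMod (p ^ α)) * ((n : ZMod (p ^ α)) * x ^ 2 - 1) = 0 := by
      rw [← key, hℓ0]; ring
    exact sub_eq_zero.mp ((h4u.mul_right_eq_zero).mp h0)
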